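/- Suppose h₁ ≡ c̃₁ and h₂ ≡ c̃₂ are positive constant functions, and let y₁⁰, y₂⁰ > 0. If p₁₁ > 1, or p₂₂ > 1, or (p₁₁−1)·(p₂₂−1) − p₁₂·p₂₁ < 0, then the ODE system has no global positive solution with these initial values: there is no pair of differentiable functions y₁, y₂ : [0,∞) → (0,∞) with y₁(0) = y₁⁰ and y₂(0) = y₂⁰ satisfying y₁'(t) = c̃₁·y₁(t)^{p₁₁}·y₂(t)^{p₁₂} and y₂'(t) = c̃₂·y₂(t)^{p₂₂}·y₁(t)^{p₂₁} for all t ≥ 0. -/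

import Mathlib

open Set


lemma monoOn_aux {f g : ℝ → ℝ}
    (hf : ∀ t ∈ Ici (0:ℝ), HasDerivWithinAt f (g t) (Ici 0) t)
    (hg : ∀ t ∈ Ici (0:ℝ), 0 ≤ g t) : MonotoneOn f (Ici 0) := by
  apply monotoneOn_of_deriv_nonneg (convex_Ici 0)
  · exact fun t ht => (hf t ht).continuousWithinAt
  · intro t ht
    rw [interior_Ici] at ht
    exact ((hf t (Set.mem_Ici.mpr (Set.mem_Ioi.mp ht).le)).hasDerivAt (Ici_mem_nhds ht)).differentiableAt.differentiableWithinAt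
  · intro t ht
    rw [interior_Ici] at ht
    rw [((hf t (Set.mem_Ici.mpr (Set.mem_Ioi.mp ht).le)).hasDerivAt (Ici_mem_nhds ht)).deriv]
    exact hg t (Set.mem_Ici.mpr (Set.mem_Ioi.mp ht).le)

lemma antiOn_aux {f g : ℝ → ℝ}
    (hf : ∀ t ∈ Ici (0:ℝ), HasDerivWithinAt f (g t) (Ici 0) t)
    (hg : ∀ t ∈ Ici (0:ℝ), g t ≤ 0) : AntitoneOn f (Ici 0) := by
  apply antitoneOn_of_deriv_nonpos (convex_Ici 0)
  · exact fun t ht => (hf t ht).continuousWithinAt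
  · intro t ht
    rw [interior_Ici] at ht
    exact ((hf t (Set.mem_Ici.mpr (Set.mem_Ioi.mp ht).le)).hasDerivAt (Ici_mem_nhds ht)).differentiableAt.differentiableWithinAt
  · intro t ht
    rw [interior_Ici] at ht
    rw [((hf t (Set.mem_Ici.mpr (Set.mem_Ioi.mp ht).le)).hasDerivAt (Ici_mem_nhds ht)).deriv]
    exact hg t (Set.mem_Ici.mpr (Set.mem_Ioi.mp ht).le)

lemma riccati {z g : ℝ → ℝ} {K : ℝ} (hK : 0 < K)
    (hz : ∀ t ∈ Ici (0:ℝ), 0 < z t)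
    (hd : ∀ t ∈ Ici (0:ℝ), HasDerivWithinAt z (g t) (Ici 0) t)
    (hg : ∀ t ∈ Ici (0:ℝ), K * (z t * z t) ≤ g t) : False := by
  have hw : ∀ t ∈ Ici (0:ℝ), HasDerivWithinAt (fun t => (z t)⁻¹ + K * t)
      (-g t / (z t) ^ 2 + K) (Ici 0) t := by
    intro t ht
    exact ((hd t ht).inv (hz t ht).ne').add
      (by simpa using (hasDerivWithinAt_id t (Ici 0)).const_mul K)
  have hanti : AntitoneOn (fun t => (z t)⁻¹ + K * t) (Ici 0) := by
    apply antiOn_aux hw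
    intro t ht
    have h1 : K * (z t)^2 ≤ g t := by have := hg t ht; nlinarith
    have h2 : (0:ℝ) < (z t)^2 := pow_pos (hz t ht) 2
    rw [div_add' _ _ _ h2.ne']
    apply div_nonpos_of_nonpos_of_nonneg _ h2.le
    nlinarith
  set T : ℝ := ((z 0)⁻¹ + 1) / K with hT
  have hz0 : 0 < z 0 := hz 0 self_mem_Ici
  have hT0 : 0 ≤ T := by positivity
  have := hanti (self_mem_Ici) hT0 hT0
  have hzT : 0 < z T := hz T hT0
  have : K * T ≤ (z 0)⁻¹ := by
    have h1 : (0:ℝ) < (z T)⁻¹ := by positivity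
    simp only [mul_zero, add_zero] at this
    linarith
  rw [hT, mul_div_cancel₀ _ hK.ne'] at this
  linarith

lemma single_case {p q c : ℝ} (hq : 0 ≤ q) (hc : 0 < c) (hp : 1 < p) {y w : ℝ → ℝ}
    (hy : ∀ t ∈ Ici (0:ℝ), 0 < y t) (hw0 : 0 < w 0)
    (hwlb : ∀ t ∈ Ici (0:ℝ), w 0 ≤ w t)
    (hyd : ∀ t ∈ Ici (0:ℝ), HasDerivWithinAt y (c * y t ^ p * w t ^ q) (Ici 0) t) :
    False := by
  refine riccati (z := fun t => y t ^ (p-1))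
    (g := fun t => (c * y t ^ p * w t ^ q) * (p-1) * y t ^ (p-1-1))
    (K := c * (p-1) * w 0 ^ q) (by have h := sub_pos.mpr hp; positivity) ?_ ?_ ?_
  · exact fun t ht => Real.rpow_pos_of_pos (hy t ht) _
  · exact fun t ht => (hyd t ht).rpow_const (Or.inl (hy t ht).ne')
  · intro t ht
    have hyt := hy t ht
    have hwt : w 0 ≤ w t := hwlb t ht
    have hwq : w 0 ^ q ≤ w t ^ q := Real.rpow_le_rpow hw0.le hwt hq
    have key : y t ^ p * y t ^ (p-1-1) = y t ^ (p-1) * y t ^ (p-1) := by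
      rw [← Real.rpow_add hyt, ← Real.rpow_add hyt]; ring_nf
    have h1 : (0:ℝ) < y t ^ (p-1) := Real.rpow_pos_of_pos hyt _
    have h2 : (0:ℝ) < y t ^ p := Real.rpow_pos_of_pos hyt _
    have h3 : (0:ℝ) < y t ^ (p-1-1) := Real.rpow_pos_of_pos hyt _
    calc c * (p-1) * w 0 ^ q * (y t ^ (p-1) * y t ^ (p-1))
        = c * (p-1) * w 0 ^ q * (y t ^ p * y t ^ (p-1-1)) := by rw [key]
      _ ≤ c * (p-1) * w t ^ q * (y t ^ p * y t ^ (p-1-1)) := by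
          have h := sub_pos.mpr hp
          gcongr
      _ = (c * y t ^ p * w t ^ q) * (p-1) * y t ^ (p-1-1) := by ring

lemma coupled_case {p11 p12 p21 p22 c1 c2 : ℝ}
    (hp12 : 0 ≤ p12) (hp21 : 0 ≤ p21)
    (hc1 : 0 < c1) (hc2 : 0 < c2)
    (h1 : p11 ≤ 1) (h2 : p22 ≤ 1)
    (hab : (1 - p11) * (1 - p22) < p12 * p21)
    {y1 y2 : ℝ → ℝ}
    (hy1 : ∀ t ∈ Ici (0:ℝ), 0 < y1 t) (hy2 : ∀ t ∈ Ici (0:ℝ), 0 < y2 t)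
    (hd1 : ∀ t ∈ Ici (0:ℝ), HasDerivWithinAt y1 (c1 * y1 t ^ p11 * y2 t ^ p12) (Ici 0) t)
    (hd2 : ∀ t ∈ Ici (0:ℝ), HasDerivWithinAt y2 (c2 * y2 t ^ p22 * y1 t ^ p21) (Ici 0) t) :
    False := by
  set a := 1 - p11 with ha_def
  set b := 1 - p22 with hb_def
  have ha : 0 ≤ a := by simp [ha_def]; linarith
  have hb : 0 ≤ b := by simp [hb_def]; linarith
  have hab' : a * b < p12 * p21 := hab
  have hp12' : 0 < p12 := by
    rcases hp12.lt_or_eq with h | h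
    · exact h
    · exfalso; nlinarith [mul_nonneg ha hb]
  have hp21' : 0 < p21 := by
    rcases hp21.lt_or_eq with h | h
    · exact h
    · exfalso; nlinarith [mul_nonneg ha hb]
  -- choose s with b < s * p12 and s * a < p21
  obtain ⟨s, hs1, hs2⟩ : ∃ s : ℝ, b < s * p12 ∧ s * a < p21 := by
    rcases ha.lt_or_eq with haa | haa
    · refine ⟨(b/p12 + p21/a)/2, ?_, ?_⟩
      · have hlt : b/p12 < p21/a := by
          rw [div_lt_div_iff₀ hp12' haa]; nlinarith
        rw [← div_lt_iff₀ hp12']; linarith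
      · have hlt : b/p12 < p21/a := by
          rw [div_lt_div_iff₀ hp12' haa]; nlinarith
        rw [← lt_div_iff₀ haa]; linarith
    · refine ⟨b/p12 + 1, ?_, ?_⟩
      · rw [add_mul, div_mul_cancel₀ _ hp12'.ne']; linarith
      · rw [← haa]; simpa using hp21'
  have hs0 : 0 < s := by nlinarith
  have hs1' : (0:ℝ) < 1 + s := by linarith
  set θ : ℝ := s / (1 + s) with hθ_def
  have hθ : 0 < θ := by positivity
  have hθ1 : θ < 1 := by rw [hθ_def, div_lt_one hs1']; linarith
  set lam : ℝ := (p21 - s * a) / (1 + s) with hlam_def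
  set mu : ℝ := (s * p12 - b) / (1 + s) with hmu_def
  have hlam : 0 < lam := by apply div_pos; linarith; exact hs1'
  have hmu : 0 < mu := by apply div_pos; linarith; exact hs1'
  -- exponent identities
  have hex1 : (p11 + lam - 1) * θ + (p21 + lam) * (1 - θ) = 2 * lam := by
    rw [hθ_def, hlam_def, ha_def]; field_simp; ring
  have hex2 : (p12 + mu) * θ + (p22 + mu - 1) * (1 - θ) = 2 * mu := by
    rw [hθ_def, hmu_def, hb_def]; field_simp; ring
  set K : ℝ := (c1 * lam / θ) ^ θ * (c2 * mu / (1 - θ)) ^ (1 - θ) with hK_def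
  have hθ1' : 0 < 1 - θ := by linarith
  have hK : 0 < K := by
    apply mul_pos <;> apply Real.rpow_pos_of_pos <;> positivity
  refine riccati (z := fun t => y1 t ^ lam * y2 t ^ mu)
    (g := fun t => ((c1 * y1 t ^ p11 * y2 t ^ p12) * lam * y1 t ^ (lam - 1)) * y2 t ^ mu
        + y1 t ^ lam * ((c2 * y2 t ^ p22 * y1 t ^ p21) * mu * y2 t ^ (mu - 1)))
    hK ?_ ?_ ?_
  · intro t ht
    exact mul_pos (Real.rpow_pos_of_pos (hy1 t ht) _) (Real.rpow_pos_of_pos (hy2 t ht) _)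
  · intro t ht
    exact ((hd1 t ht).rpow_const (Or.inl (hy1 t ht).ne')).mul
      ((hd2 t ht).rpow_const (Or.inl (hy2 t ht).ne'))
  · intro t ht
    beta_reduce
    have hx : 0 < y1 t := hy1 t ht
    have hu : 0 < y2 t := hy2 t ht
    set x := y1 t
    set u := y2 t
    set A : ℝ := (c1 * lam / θ) * (x ^ (p11 + lam - 1) * u ^ (p12 + mu)) with hA_def
    set B : ℝ := (c2 * mu / (1 - θ)) * (x ^ (p21 + lam) * u ^ (p22 + mu - 1)) with hB_def
    have hA : 0 ≤ A := by positivity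
    have hB : 0 ≤ B := by positivity
    have geom : A ^ θ * B ^ (1 - θ) ≤ θ * A + (1 - θ) * B :=
      Real.geom_mean_le_arith_mean2_weighted hθ.le hθ1'.le hA hB (by ring)
    have hg_eq : ((c1 * x ^ p11 * u ^ p12) * lam * x ^ (lam - 1)) * u ^ mu
        + x ^ lam * ((c2 * u ^ p22 * x ^ p21) * mu * u ^ (mu - 1))
        = θ * A + (1 - θ) * B := by
      rw [hA_def, hB_def,
        show p11 + lam - 1 = p11 + (lam - 1) by ring,
        show p12 + mu = p12 + mu by rfl,
        Real.rpow_add hx p11 (lam - 1), Real.rpow_add hu p12 mu,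
        show p21 + lam = p21 + lam by rfl,
        show p22 + mu - 1 = p22 + (mu - 1) by ring,
        Real.rpow_add hx p21 lam, Real.rpow_add hu p22 (mu - 1)]
      field_simp
    have hAB : A ^ θ * B ^ (1 - θ) = K * ((x ^ lam * u ^ mu) * (x ^ lam * u ^ mu)) := by
      rw [hA_def, hB_def,
        Real.mul_rpow (by positivity) (by positivity),
        Real.mul_rpow (by positivity) (by positivity),
        Real.mul_rpow (by positivity) (by positivity),
        Real.mul_rpow (by positivity) (by positivity),
        ← Real.rpow_mul hx.le, ← Real.rpow_mul hu.le,
        ← Real.rpow_mul hx.le, ← Real.rpow_mul hu.le, hK_def]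
      have : x ^ ((p11 + lam - 1) * θ) * x ^ ((p21 + lam) * (1 - θ))
          = x ^ lam * x ^ lam := by
        rw [← Real.rpow_add hx, ← Real.rpow_add hx, hex1]; ring_nf
      have h2 : u ^ ((p12 + mu) * θ) * u ^ ((p22 + mu - 1) * (1 - θ))
          = u ^ mu * u ^ mu := by
        rw [← Real.rpow_add hu, ← Real.rpow_add hu, hex2]; ring_nf
      calc (c1 * lam / θ) ^ θ * (x ^ ((p11 + lam - 1) * θ) * u ^ ((p12 + mu) * θ))
            * ((c2 * mu / (1 - θ)) ^ (1 - θ)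
              * (x ^ ((p21 + lam) * (1 - θ)) * u ^ ((p22 + mu - 1) * (1 - θ))))
          = (c1 * lam / θ) ^ θ * (c2 * mu / (1 - θ)) ^ (1 - θ)
            * ((x ^ ((p11 + lam - 1) * θ) * x ^ ((p21 + lam) * (1 - θ)))
              * (u ^ ((p12 + mu) * θ) * u ^ ((p22 + mu - 1) * (1 - θ)))) := by ring
        _ = (c1 * lam / θ) ^ θ * (c2 * mu / (1 - θ)) ^ (1 - θ)
            * ((x ^ lam * x ^ lam) * (u ^ mu * u ^ mu)) := by rw [this, h2]
        _ = (c1 * lam / θ) ^ θ * (c2 * mu / (1 - θ)) ^ (1 - θ)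
            * (x ^ lam * u ^ mu * (x ^ lam * u ^ mu)) := by ring
    rw [hg_eq, ← hAB]
    exact geom


/-- blow-up criterion for the autonomous ODE system
(Corollary 1.4 of the paper). If `p₁₁ > 1`, or `p₂₂ > 1`, or
`(p₁₁-1)(p₂₂-1) - p₁₂p₂₁ < 0`, then the constant-coefficient ODE system has no
global positive solution on `[0,∞)` with prescribed positive initial values. -/
theorem statement7 (p11 p12 p21 p22 : ℝ)
    (hp11 : 0 ≤ p11) (hp12 : 0 ≤ p12) (hp21 : 0 ≤ p21) (hp22 : 0 ≤ p22)
    (c1 c2 : ℝ) (hc1 : 0 < c1) (hc2 : 0 < c2)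
    (y10 y20 : ℝ) (hy10 : 0 < y10) (hy20 : 0 < y20)
    (hcond : 1 < p11 ∨ 1 < p22 ∨ (p11 - 1) * (p22 - 1) - p12 * p21 < 0) :
    ¬ ∃ y1 y2 : ℝ → ℝ,
        y1 0 = y10 ∧ y2 0 = y20 ∧
        (∀ t : ℝ, 0 ≤ t → 0 < y1 t) ∧ (∀ t : ℝ, 0 ≤ t → 0 < y2 t) ∧
        (∀ t : ℝ, 0 ≤ t →
          HasDerivWithinAt y1 (c1 * y1 t ^ p11 * y2 t ^ p12) (Set.Ici 0) t) ∧
        (∀ t : ℝ, 0 ≤ t →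
          HasDerivWithinAt y2 (c2 * y2 t ^ p22 * y1 t ^ p21) (Set.Ici 0) t) := by
  rintro ⟨y1, y2, h10, h20, hpos1, hpos2, hD1, hD2⟩
  have hy1 : ∀ t ∈ Ici (0:ℝ), 0 < y1 t := fun t ht => hpos1 t ht
  have hy2 : ∀ t ∈ Ici (0:ℝ), 0 < y2 t := fun t ht => hpos2 t ht
  have hd1 : ∀ t ∈ Ici (0:ℝ), HasDerivWithinAt y1 (c1 * y1 t ^ p11 * y2 t ^ p12) (Ici 0) t :=
    fun t ht => hD1 t ht
  have hd2 : ∀ t ∈ Ici (0:ℝ), HasDerivWithinAt y2 (c2 * y2 t ^ p22 * y1 t ^ p21) (Ici 0) t :=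
    fun t ht => hD2 t ht
  have hmono1 : MonotoneOn y1 (Ici 0) := by
    apply monoOn_aux hd1
    intro t ht
    have := hy1 t ht; have := hy2 t ht
    positivity
  have hmono2 : MonotoneOn y2 (Ici 0) := by
    apply monoOn_aux hd2
    intro t ht
    have := hy1 t ht; have := hy2 t ht
    positivity
  have hlb1 : ∀ t ∈ Ici (0:ℝ), y1 0 ≤ y1 t := fun t ht => hmono1 self_mem_Ici ht ht
  have hlb2 : ∀ t ∈ Ici (0:ℝ), y2 0 ≤ y2 t := fun t ht => hmono2 self_mem_Ici ht ht
  have case1 : 1 < p11 → False := fun h =>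
    single_case hp12 hc1 h hy1 (hy2 0 self_mem_Ici) hlb2 hd1
  have case2 : 1 < p22 → False := fun h =>
    single_case hp21 hc2 h hy2 (hy1 0 self_mem_Ici) hlb1 hd2
  rcases hcond with h | h | h
  · exact case1 h
  · exact case2 h
  · rcases le_or_gt p11 1 with h1 | h1
    · rcases le_or_gt p22 1 with h2 | h2
      · exact coupled_case hp12 hp21 hc1 hc2 h1 h2 (by nlinarith) hy1 hy2 hd1 hd2
      · exact case2 h2
    · exact case1 h1
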